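/- The q-Eulerian polynomials E_n(x,q) = Σ_{σ ∈ S_n} x^{des(σ)} q^{w(σ)} satisfy E_0(x,q) = 1 and, for n ≥ 1, E_n(x,q) = Σ_{i=1}^{n−1} C(n−1, i) · E_i(x,q) · E_{n−i−1}(qx, q) · x + E_{n−1}(qx, q). -/

import Mathlib

/-- Number of descents of a sequence. -/
def desL : List ℕ → ℕ
  | a :: b :: t => (if b < a then 1 else 0) + desL (b :: t)
  | _ => 0

/-- Repeatedly split a sequence just after its maximum element. -/
def splitLeftAux : ℕ → List ℕ → List (List ℕ)
  | 0, _ => []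
  | _, [] => []
  | fuel + 1, l =>
    let i := l.idxOf (l.foldr Nat.max 0)
    l.take (i + 1) :: splitLeftAux fuel (l.drop (i + 1))

def splitLeft (l : List ℕ) : List (List ℕ) := splitLeftAux l.length l

/-- Split a sequence at its minimum element, splitting the left part
repeatedly just after its maximum. -/
def splitAll (l : List ℕ) : List (List ℕ) :=
  let m := l.foldr Nat.min (l.headD 0)
  let i := l.idxOf m
  splitLeft (l.take i) ++ [[m]] ++ [l.drop (i + 1)]

/-- The weight of a sequence of distinct naturals (fuelled version; the fuel
`(length+2)^2` in `weightL` is more than the recursion depth ever needed). -/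
def weightAux : ℕ → List ℕ → ℕ
  | 0, _ => 0
  | fuel + 1, l =>
    if l.length ≤ 1 ∨ l.Pairwise (· < ·) then 0
    else ((splitAll (l ++ [l.foldr Nat.max 0 + 1])).map
      (fun p => desL p + weightAux fuel p)).sum

/-- The weight of a permutation viewed as a sequence. -/
def weightL (l : List ℕ) : ℕ := weightAux ((l.length + 2) ^ 2) l

/-- `l` is a permutation of `[n] = {1,…,n}` written as a sequence. -/
def IsPermList (n : ℕ) (l : List ℕ) : Prop := l.Perm (List.range' 1 n)


/-- The word (one-line notation, entries in `{1,…,n}`) of a permutation. -/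
def permWord {n : ℕ} (σ : Equiv.Perm (Fin n)) : List ℕ :=
  List.ofFn fun i => (σ i : ℕ) + 1

/-- `E_n[x^d q^m]`: the number of permutations of `[n]` with `d` descents and weight `m`. -/
def Ecoeff (n d m : ℕ) : ℕ :=
  (Finset.univ.filter fun σ : Equiv.Perm (Fin n) =>
    desL (permWord σ) = d ∧ weightL (permWord σ) = m).card

open MvPolynomial in
/-- The q-Eulerian polynomial `E_n(x,q)`, with `X 0 = x` and `X 1 = q`. -/
noncomputable def Epoly (n : ℕ) : MvPolynomial (Fin 2) ℤ :=
  ∑ σ : Equiv.Perm (Fin n), X 0 ^ desL (permWord σ) * X 1 ^ weightL (permWord σ)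

open MvPolynomial in
/-- `E_n(qx,q)`, i.e. `E_n` with `x` replaced by `qx`. -/
noncomputable def EpolyQx (n : ℕ) : MvPolynomial (Fin 2) ℤ :=
  ∑ σ : Equiv.Perm (Fin n),
    (X 1 * X 0) ^ desL (permWord σ) * X 1 ^ weightL (permWord σ)

section S1
open List

lemma desL_nil : desL [] = 0 := rfl
lemma desL_single (a : ℕ) : desL [a] = 0 := rfl
lemma desL_cons_cons (a b : ℕ) (t : List ℕ) :
    desL (a :: b :: t) = (if b < a then 1 else 0) + desL (b :: t) := rfl

lemma desL_sorted : ∀ {l : List ℕ}, l.Pairwise (· < ·) → desL l = 0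
  | [], _ => rfl
  | [_], _ => rfl
  | a :: b :: t, h => by
    rw [desL_cons_cons, desL_sorted h.of_cons, if_neg (Nat.not_lt.2 (le_of_lt
      (List.rel_of_pairwise_cons h (show b ∈ b :: t from mem_cons_self))))]

lemma desL_append (a b : ℕ) (l₁ l₂ : List ℕ) :
    desL (l₁ ++ a :: b :: l₂) = desL (l₁ ++ [a]) + desL (b :: l₂) +
      (if b < a then 1 else 0) := by
  induction l₁ with
  | nil => rw [nil_append, desL_cons_cons, nil_append]; simp [desL_single]; ring
  | cons x l ih =>
    cases l with
    | nil => simp [desL_cons_cons] at ih ⊢; omega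
    | cons y l' => simp only [cons_append, desL_cons_cons] at ih ⊢; omega

/-- appending elements larger than everything, in increasing order, adds no descents -/
lemma desL_append_gt : ∀ (l t : List ℕ), t.Pairwise (· < ·) →
    (∀ x ∈ l, ∀ y ∈ t, x < y) → desL (l ++ t) = desL l
  | l, [], _, _ => by simp
  | [], t, ht, _ => by simpa [desL_nil] using desL_sorted ht
  | [a], b :: t, ht, h => by
    rw [cons_append, nil_append, desL_cons_cons, desL_sorted ht,
      if_neg (Nat.not_lt.2 (le_of_lt (h a (by simp) b (by simp))))]
    rfl
  | a :: c :: l, t, ht, h => by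
    rw [cons_append, cons_append, desL_cons_cons, ← cons_append,
      desL_append_gt (c :: l) t ht (fun x hx => h x (mem_cons_of_mem a hx)),
      desL_cons_cons]

end S1
section S2
open List

/-- the min as computed inside `splitAll` / our clean weight -/
def minL (l : List ℕ) : ℕ := l.foldr Nat.min (l.headD 0)
def maxL (l : List ℕ) : ℕ := l.foldr Nat.max 0

lemma foldr_min_le_init (l : List ℕ) (i : ℕ) : l.foldr Nat.min i ≤ i := by
  induction l with
  | nil => simp
  | cons a t ih => exact le_trans (Nat.min_le_right _ _) ih

lemma foldr_min_le_mem {l : List ℕ} {x : ℕ} (hx : x ∈ l) (i : ℕ) :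
    l.foldr Nat.min i ≤ x := by
  induction l with
  | nil => simp at hx
  | cons a t ih =>
    rcases mem_cons.1 hx with h | h
    · subst h; exact Nat.min_le_left _ _
    · exact le_trans (Nat.min_le_right _ _) (ih h)

lemma foldr_min_mem {l : List ℕ} (i : ℕ) : l.foldr Nat.min i = i ∨ l.foldr Nat.min i ∈ l := by
  induction l with
  | nil => simp
  | cons a t ih =>
    have hc : Nat.min a (t.foldr Nat.min i) = a ∨ Nat.min a (t.foldr Nat.min i) = t.foldr Nat.min i :=
      min_choice a (t.foldr Nat.min i)
    rcases hc with h | h <;> rw [foldr_cons, h]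
    · exact Or.inr (mem_cons_self)
    · rcases ih with h' | h'
      · exact Or.inl h'
      · exact Or.inr (mem_cons_of_mem _ h')

lemma minL_mem {l : List ℕ} (h : l ≠ []) : minL l ∈ l := by
  rcases foldr_min_mem (l := l) (l.headD 0) with h' | h'
  · rw [minL, h']; cases l with
    | nil => simp at h
    | cons a t => exact mem_cons_self
  · exact h'

lemma minL_le {l : List ℕ} {x : ℕ} (hx : x ∈ l) : minL l ≤ x := foldr_min_le_mem hx _

lemma minL_eq {l : List ℕ} {m : ℕ} (h : l ≠ []) (hm : m ∈ l) (hle : ∀ x ∈ l, m ≤ x) :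
    minL l = m := le_antisymm (minL_le hm) (hle _ (minL_mem h))

lemma foldr_max_mem {l : List ℕ} (h : l ≠ []) : maxL l ∈ l := by
  induction l with
  | nil => simp at h
  | cons a t ih =>
    have hc : Nat.max a (t.foldr Nat.max 0) = a ∨ Nat.max a (t.foldr Nat.max 0) = t.foldr Nat.max 0 :=
      max_choice a (t.foldr Nat.max 0)
    rcases hc with h' | h' <;> rw [maxL, foldr_cons, h']
    · exact mem_cons_self
    · rcases t with _ | ⟨b, t⟩
      · simp only [foldr_nil, Nat.max_zero] at h'
        simp [h']
      · exact mem_cons_of_mem _ (ih (by simp))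

lemma le_maxL {l : List ℕ} {x : ℕ} (hx : x ∈ l) : x ≤ maxL l := by
  induction l with
  | nil => simp at hx
  | cons a t ih =>
    rcases mem_cons.1 hx with h | h
    · subst h; exact Nat.le_max_left _ _
    · exact le_trans (ih h) (Nat.le_max_right _ _)

lemma maxL_eq {l : List ℕ} {m : ℕ} (h : l ≠ []) (hm : m ∈ l) (hle : ∀ x ∈ l, x ≤ m) :
    maxL l = m := le_antisymm (hle _ (foldr_max_mem h)) (le_maxL hm)

/-- min of a list with larger stuff appended -/
lemma minL_append {c t : List ℕ} (hc : c ≠ []) (h : ∀ x ∈ c, ∀ y ∈ t, x < y) :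
    minL (c ++ t) = minL c := by
  apply minL_eq (by simp [hc]) (mem_append_left _ (minL_mem hc))
  intro x hx
  rcases mem_append.1 hx with h' | h'
  · exact minL_le h'
  · exact le_of_lt (h _ (minL_mem hc) _ h')

lemma splitLeftAux_succ (fuel : ℕ) {l : List ℕ} (h : l ≠ []) :
    splitLeftAux (fuel+1) l = l.take (List.idxOf (l.foldr Nat.max 0) l + 1) ::
      splitLeftAux fuel (l.drop (List.idxOf (l.foldr Nat.max 0) l + 1)) := by
  cases l with
  | nil => simp at h
  | cons a t => rfl

lemma splitLeftAux_sublist : ∀ (fuel : ℕ) (l p : List ℕ), p ∈ splitLeftAux fuel l → p.Sublist l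
  | 0, l, p => by simp [splitLeftAux]
  | fuel + 1, [], p => by simp [splitLeftAux]
  | fuel + 1, a :: l, p => by
    intro hp
    rw [splitLeftAux_succ fuel (by simp)] at hp
    rcases mem_cons.1 hp with h | h
    · exact h ▸ take_sublist _ _
    · exact (splitLeftAux_sublist fuel _ p h).trans (drop_sublist _ _)

lemma splitLeftAux_eq_of_le : ∀ (f₁ f₂ : ℕ) (l : List ℕ), l.length ≤ f₁ → l.length ≤ f₂ →
    splitLeftAux f₁ l = splitLeftAux f₂ l := by
  intro f₁
  induction f₁ using Nat.strong_induction_on with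
  | _ f₁ ih =>
    intro f₂ l h₁ h₂
    cases l with
    | nil => cases f₁ <;> cases f₂ <;> rfl
    | cons a t =>
      simp only [length_cons] at h₁ h₂
      obtain ⟨g₁, rfl⟩ : ∃ g, f₁ = g + 1 := ⟨f₁ - 1, by omega⟩
      obtain ⟨g₂, rfl⟩ : ∃ g, f₂ = g + 1 := ⟨f₂ - 1, by omega⟩
      rw [splitLeftAux_succ g₁ (by simp), splitLeftAux_succ g₂ (by simp)]
      have hd : ((a :: t).drop (idxOf (foldr Nat.max 0 (a :: t)) (a :: t) + 1)).length ≤ g₁ := by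
        rw [length_drop]; simp only [length_cons]; omega
      have hd₂ : ((a :: t).drop (idxOf (foldr Nat.max 0 (a :: t)) (a :: t) + 1)).length ≤ g₂ := by
        rw [length_drop]; simp only [length_cons]; omega
      rw [ih g₁ (by omega) _ _ hd hd₂]

lemma splitLeftAux_eq_splitLeft {fuel : ℕ} {l : List ℕ} (h : l.length ≤ fuel) :
    splitLeftAux fuel l = splitLeft l := splitLeftAux_eq_of_le _ _ _ h le_rfl

/-- unfolding of splitLeft when the max position is known -/
lemma splitLeft_eq {γ δ : List ℕ} {M : ℕ} (hM : ∀ x ∈ γ ++ δ, x < M) :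
    splitLeft (γ ++ M :: δ) = (γ ++ [M]) :: splitLeft δ := by
  have hmax : maxL (γ ++ M :: δ) = M := by
    apply maxL_eq (by simp) (by simp)
    intro x hx
    rcases mem_append.1 hx with h | h
    · exact le_of_lt (hM x (mem_append_left _ h))
    · rcases mem_cons.1 h with h | h
      · exact h.le
      · exact le_of_lt (hM x (mem_append_right _ h))
  have hidx : idxOf (maxL (γ ++ M :: δ)) (γ ++ M :: δ) = γ.length := by
    rw [hmax, idxOf_append_of_notMem, idxOf_cons_self]
    · simp
    · intro hmem; exact lt_irrefl M (hM M (mem_append_left _ hmem))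
  rw [splitLeft]
  have hlen : (γ ++ M :: δ).length = γ.length + δ.length + 1 := by simp; omega
  obtain ⟨g, hg⟩ : ∃ g, (γ ++ M :: δ).length = g + 1 := ⟨_, hlen⟩
  rw [hg, splitLeftAux_succ g (by simp)]
  rw [maxL] at hidx
  rw [hidx]
  congr 1
  · rw [List.take_length_add_append 1]; rfl
  · rw [List.drop_length_add_append 1, drop_one]
    show splitLeftAux g δ = _
    simp only [length_append, length_cons] at hg
    exact splitLeftAux_eq_splitLeft (by omega)

end S2
section S3
open List

lemma sorted_of_length_le_one {l : List ℕ} (h : l.length ≤ 1) : l.Pairwise (· < ·) := by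
  match l, h with
  | [], _ => exact Pairwise.nil
  | [a], _ => exact pairwise_singleton _ a

lemma sorted_append_gt {l t : List ℕ} (hl : l.Pairwise (· < ·)) (ht : t.Pairwise (· < ·))
    (h : ∀ x ∈ l, ∀ y ∈ t, x < y) : (l ++ t).Pairwise (· < ·) := by
  rw [pairwise_append]; exact ⟨hl, ht, h⟩

/-- clean (fuelled by length) version of the weight -/
def WAux : ℕ → List ℕ → ℕ
  | 0, _ => 0
  | fuel + 1, l =>
    if l.length ≤ 1 ∨ l.Pairwise (· < ·) then 0
    else
      ((splitLeft (l.take (l.idxOf (minL l)))).map (fun p => desL p + WAux fuel p)).sum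
        + desL (l.drop (l.idxOf (minL l) + 1)) + WAux fuel (l.drop (l.idxOf (minL l) + 1))

def W (l : List ℕ) : ℕ := WAux l.length l

def fW (l : List ℕ) : ℕ := ((splitLeft l).map (fun p => desL p + W p)).sum

lemma WAux_succ (fuel : ℕ) (l : List ℕ) :
    WAux (fuel + 1) l =
      if l.length ≤ 1 ∨ l.Pairwise (· < ·) then 0
      else
        ((splitLeft (l.take (l.idxOf (minL l)))).map (fun p => desL p + WAux fuel p)).sum
          + desL (l.drop (l.idxOf (minL l) + 1)) + WAux fuel (l.drop (l.idxOf (minL l) + 1)) := rfl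

lemma WAux_zero_of (fuel : ℕ) {l : List ℕ} (h : l.length ≤ 1 ∨ l.Pairwise (· < ·)) :
    WAux fuel l = 0 := by
  cases fuel with
  | zero => rfl
  | succ g => rw [WAux_succ, if_pos h]

lemma W_zero_of {l : List ℕ} (h : l.length ≤ 1 ∨ l.Pairwise (· < ·)) : W l = 0 :=
  WAux_zero_of _ h

lemma mem_splitLeft_sublist {l p : List ℕ} (hp : p ∈ splitLeft l) : p.Sublist l :=
  splitLeftAux_sublist _ _ _ hp

/-- index of the min is < length, and the two parts are genuinely shorter -/
lemma indexOf_minL_lt {l : List ℕ} (h : l ≠ []) : l.idxOf (minL l) < l.length :=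
  idxOf_lt_length_iff.2 (minL_mem h)

lemma WAux_stable : ∀ (n : ℕ) (l : List ℕ), l.length = n → ∀ (f₁ f₂ : ℕ), n ≤ f₁ → n ≤ f₂ →
    WAux f₁ l = WAux f₂ l := by
  intro n
  induction n using Nat.strong_induction_on with
  | _ n ih =>
    intro l hl f₁ f₂ h₁ h₂
    by_cases htriv : l.length ≤ 1 ∨ l.Pairwise (· < ·)
    · rw [WAux_zero_of _ htriv, WAux_zero_of _ htriv]
    · have hn2 : 2 ≤ n := by
        rcases Nat.lt_or_ge n 2 with h | h
        · exact absurd (Or.inl (by omega)) htriv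
        · exact h
      obtain ⟨g₁, rfl⟩ : ∃ g, f₁ = g + 1 := ⟨f₁ - 1, by omega⟩
      obtain ⟨g₂, rfl⟩ : ∃ g, f₂ = g + 1 := ⟨f₂ - 1, by omega⟩
      rw [WAux_succ, WAux_succ, if_neg htriv, if_neg htriv]
      have hne : l ≠ [] := by intro he; rw [he] at hl; simp at hl; omega
      have hidx : l.idxOf (minL l) < l.length := indexOf_minL_lt hne
      have hdrop : (l.drop (l.idxOf (minL l) + 1)).length < n := by
        rw [length_drop]; omega
      congr 1
      · congr 1
        congr 1
        apply map_congr_left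
        intro p hp
        have hplen : p.length < n := by
          have := (mem_splitLeft_sublist hp).length_le
          rw [length_take] at this
          omega
        rw [ih p.length hplen p rfl g₁ g₂ (by omega) (by omega)]
      · exact ih _ hdrop _ rfl g₁ g₂ (by omega) (by omega)

lemma WAux_eq_W {fuel : ℕ} {l : List ℕ} (h : l.length ≤ fuel) : WAux fuel l = W l :=
  WAux_stable l.length l rfl fuel l.length h le_rfl

/-- unfolding of `W` in the non-trivial case -/
lemma W_unfold {l : List ℕ} (h : ¬(l.length ≤ 1 ∨ l.Pairwise (· < ·))) :
    W l = ((splitLeft (l.take (l.idxOf (minL l)))).map (fun p => desL p + W p)).sum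
        + desL (l.drop (l.idxOf (minL l) + 1)) + W (l.drop (l.idxOf (minL l) + 1)) := by
  have hne : l ≠ [] := by intro he; rw [he] at h; exact h (Or.inl (by simp))
  have hidx := indexOf_minL_lt hne
  obtain ⟨g, hg⟩ : ∃ g, l.length = g + 1 := ⟨l.length - 1, by omega⟩
  rw [W, hg, WAux_succ, if_neg h]
  congr 1
  · congr 1
    congr 1
    apply map_congr_left
    intro p hp
    have : p.length ≤ g := by
      have := (mem_splitLeft_sublist hp).length_le
      rw [length_take] at this
      omega
    rw [WAux_eq_W this]
  · apply WAux_eq_W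
    rw [length_drop]; omega

end S3
section S4
open List

lemma weightAux_succ (fuel : ℕ) (l : List ℕ) :
    weightAux (fuel + 1) l =
      if l.length ≤ 1 ∨ l.Pairwise (· < ·) then 0
      else ((splitAll (l ++ [l.foldr Nat.max 0 + 1])).map
        (fun p => desL p + weightAux fuel p)).sum := rfl

lemma weightAux_zero_of (fuel : ℕ) {l : List ℕ} (h : l.length ≤ 1 ∨ l.Pairwise (· < ·)) :
    weightAux fuel l = 0 := by
  cases fuel with
  | zero => rfl
  | succ g => rw [weightAux_succ, if_pos h]

lemma splitAll_eq (l : List ℕ) :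
    splitAll l = splitLeft (l.take (l.idxOf (minL l)))
      ++ [[minL l]] ++ [l.drop (l.idxOf (minL l) + 1)] := rfl

/-- THE MASTER LEMMA: `weightAux` on a list with an increasing tail of maxima appended
computes the clean weight `W` of the core. -/
lemma weightAux_eq_W_aux : ∀ (n : ℕ) (c : List ℕ), c.length = n → ∀ (t : List ℕ) (fuel : ℕ),
    n + 1 ≤ fuel → t.Pairwise (· < ·) → (∀ x ∈ c, ∀ y ∈ t, x < y) →
    weightAux fuel (c ++ t) = W c := by
  intro n
  induction n using Nat.strong_induction_on with
  | _ n ih =>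
    intro c hc t fuel hfuel ht habove
    obtain ⟨g, rfl⟩ : ∃ g, fuel = g + 1 := ⟨fuel - 1, by omega⟩
    by_cases htriv : c.length ≤ 1 ∨ c.Pairwise (· < ·)
    · have hcs : c.Pairwise (· < ·) := by
        rcases htriv with h | h
        · exact sorted_of_length_le_one h
        · exact h
      rw [weightAux_succ, if_pos (Or.inr (sorted_append_gt hcs ht habove)), W_zero_of htriv]
    · have hn2 : 2 ≤ c.length := by
        rcases Nat.lt_or_ge c.length 2 with h | h
        · exact absurd (Or.inl (by omega)) htriv
        · exact h
      have hne : c ≠ [] := by intro he; rw [he] at hn2; simp at hn2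
      have hnottriv : ¬((c ++ t).length ≤ 1 ∨ (c ++ t).Pairwise (· < ·)) := by
        rintro (h | h)
        · rw [length_append] at h; omega
        · exact htriv (Or.inr (h.sublist (sublist_append_left c t)))
      rw [weightAux_succ, if_neg hnottriv]
      set M := (c ++ t).foldr Nat.max 0 with hM
      set t' := t ++ [M + 1] with ht'def
      have hassoc : c ++ t ++ [M + 1] = c ++ t' := by rw [ht'def, append_assoc]
      have ht' : t'.Pairwise (· < ·) := by
        apply sorted_append_gt ht (pairwise_singleton _ _)
        intro y hy z hz
        rw [mem_singleton] at hz
        subst hz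
        have : y ≤ M := le_maxL (mem_append_right c hy)
        omega
      have habove' : ∀ x ∈ c, ∀ y ∈ t', x < y := by
        intro x hx y hy
        rcases mem_append.1 hy with h | h
        · exact habove x hx y h
        · rw [mem_singleton] at h
          subst h
          have : x ≤ M := le_maxL (mem_append_left t hx)
          omega
      have hmin : minL (c ++ t') = minL c := minL_append hne habove'
      set m := minL c with hmdef
      set i := c.idxOf m with hidef
      have hmem : m ∈ c := minL_mem hne
      have hilt : i < c.length := idxOf_lt_length_iff.2 hmem
      have hidx : (c ++ t').idxOf (minL (c ++ t')) = i := by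
        rw [hmin]; exact (idxOf_append_of_mem hmem).trans hidef.symm
      have htake : (c ++ t').take ((c ++ t').idxOf (minL (c ++ t'))) = c.take i := by
        rw [hidx, take_append_of_le_length (le_of_lt hilt)]
      have hdrop : (c ++ t').drop ((c ++ t').idxOf (minL (c ++ t')) + 1)
          = c.drop (i + 1) ++ t' := by
        rw [hidx, drop_append_of_le_length (by omega)]
      rw [hassoc, splitAll_eq, htake, hdrop, hmin, map_append, map_append, sum_append,
        sum_append]
      have hmid : ((([[m]] : List (List ℕ)).map (fun p => desL p + weightAux g p))).sum = 0 := by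
        have h0 : weightAux g [m] = 0 := weightAux_zero_of g (Or.inl (by simp))
        simp [desL_single, h0]
      have hlast : (([c.drop (i + 1) ++ t'] : List (List ℕ)).map
          (fun p => desL p + weightAux g p)).sum
          = desL (c.drop (i + 1)) + W (c.drop (i + 1)) := by
        simp only [map_cons, map_nil, sum_cons, sum_nil, add_zero]
        rw [desL_append_gt _ _ ht' (fun x hx => habove' x (mem_of_mem_drop hx)),
          ih (c.drop (i + 1)).length (by rw [length_drop]; omega) _ rfl t' g
            (by rw [length_drop]; omega) ht'
            (fun x hx => habove' x (mem_of_mem_drop hx))]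
      have hA : ((splitLeft (c.take i)).map (fun p => desL p + weightAux g p)).sum
          = ((splitLeft (c.take i)).map (fun p => desL p + W p)).sum := by
        congr 1
        apply map_congr_left
        intro p hp
        have hplen : p.length ≤ i := by
          have := (mem_splitLeft_sublist hp).length_le
          rw [length_take] at this
          omega
        have hnil : weightAux g p = weightAux g (p ++ []) := by rw [append_nil]
        rw [hnil, ih p.length (by omega) p rfl [] g (by omega) Pairwise.nil (by simp)]
      rw [hmid, hlast, add_zero, hA, W_unfold htriv, ← hmdef, ← hidef]
      ring
end S4
section S5
open List

lemma weightL_eq_W (l : List ℕ) : weightL l = W l := by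
  have h := weightAux_eq_W_aux l.length l rfl [] ((l.length + 2) ^ 2)
    (by nlinarith [l.length]) Pairwise.nil (by simp)
  rw [append_nil] at h
  exact h

lemma W_append_gt {c t : List ℕ} (ht : t.Pairwise (· < ·)) (habove : ∀ x ∈ c, ∀ y ∈ t, x < y) :
    W (c ++ t) = W c := by
  have h1 := weightL_eq_W (c ++ t)
  have h2 := weightAux_eq_W_aux c.length c rfl t (((c ++ t).length + 2) ^ 2)
    (by nlinarith [(c ++ t).length, (length_append : (c ++ t).length = _)]) ht habove
  rw [weightL] at h1
  rw [h2] at h1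
  exact h1.symm

lemma fW_nil : fW [] = 0 := rfl

/-- Decomposition of the weight of a permutation word at the value 1. -/
lemma W_decomp_min {α β : List ℕ} (hα : ∀ x ∈ α, 1 < x) (hβ : ∀ x ∈ β, 1 < x) :
    W (α ++ 1 :: β) = fW α + desL β + W β := by
  by_cases htriv : (α ++ 1 :: β).length ≤ 1 ∨ (α ++ 1 :: β).Pairwise (· < ·)
  · have hαnil : α = [] := by
      cases α with
      | nil => rfl
      | cons a α' =>
        exfalso
        rcases htriv with h | h
        · simp at h
        · rw [cons_append] at h
          have h1 : a < 1 := rel_of_pairwise_cons h (show 1 ∈ α' ++ 1 :: β by simp)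
          have h2 : 1 < a := hα a (by simp)
          omega
    subst hαnil
    simp only [nil_append] at htriv ⊢
    have hβs : β.Pairwise (· < ·) := by
      rcases htriv with h | h
      · exact sorted_of_length_le_one (by simp only [length_cons] at h; omega)
      · exact h.of_cons
    rw [W_zero_of htriv, fW_nil, desL_sorted hβs, W_zero_of (Or.inr hβs)]
  · have hmin : minL (α ++ 1 :: β) = 1 := by
      apply minL_eq (by simp) (by simp)
      intro x hx
      rcases mem_append.1 hx with h | h
      · exact le_of_lt (hα x h)
      · rcases mem_cons.1 h with h | h
        · omega
        · exact le_of_lt (hβ x h)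
    have hidx : (α ++ 1 :: β).idxOf (minL (α ++ 1 :: β)) = α.length := by
      rw [hmin, idxOf_append_of_notMem (fun hc => lt_irrefl 1 (hα 1 hc)),
        idxOf_cons_self, add_zero]
    rw [W_unfold htriv, hidx, take_left, show α.length + 1 = α.length + 1 from rfl,
      List.drop_length_add_append 1, drop_one, tail_cons]
    rfl

/-- Decomposition of `fW` of a permutation word at the maximal value. -/
lemma fW_decomp_max {γ δ : List ℕ} {M : ℕ} (hγ : ∀ x ∈ γ, x < M) (hδ : ∀ x ∈ δ, x < M) :
    fW (γ ++ M :: δ) = desL γ + W γ + fW δ := by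
  rw [fW, splitLeft_eq (by
    intro x hx
    rcases mem_append.1 hx with h | h
    · exact hγ x h
    · exact hδ x h), map_cons, sum_cons]
  rw [desL_append_gt γ [M] (pairwise_singleton _ M) (by
      intro x hx y hy
      rw [mem_singleton] at hy
      subst hy
      exact hγ x hx),
    W_append_gt (pairwise_singleton _ M) (by
      intro x hx y hy
      rw [mem_singleton] at hy
      subst hy
      exact hγ x hx)]
  rfl

/-- Descent decomposition at the value 1. -/
lemma desL_cons_min {β : List ℕ} (hβ : ∀ x ∈ β, 1 < x) : desL (1 :: β) = desL β := by
  cases β with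
  | nil => rfl
  | cons b β' =>
    rw [desL_cons_cons, if_neg (by have := hβ b (by simp); omega), zero_add]

lemma desL_decomp_min {α β : List ℕ} (hα : ∀ x ∈ α, 1 < x) (hβ : ∀ x ∈ β, 1 < x) :
    desL (α ++ 1 :: β) = desL α + desL β + (if α = [] then 0 else 1) := by
  induction α with
  | nil => simp [desL_cons_min hβ, desL_nil]
  | cons a α' ih =>
    rw [if_neg (by simp)]
    cases α' with
    | nil =>
      rw [show [a] ++ 1 :: β = a :: 1 :: β from rfl, desL_cons_cons,
        if_pos (hα a (by simp)), desL_cons_min hβ, desL_single]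
      omega
    | cons c α'' =>
      have ih' := ih (fun x hx => hα x (mem_cons_of_mem a hx))
      rw [if_neg (by simp)] at ih'
      rw [show (a :: c :: α'') ++ 1 :: β = a :: (c :: (α'' ++ 1 :: β)) from by simp,
        desL_cons_cons, show c :: (α'' ++ 1 :: β) = (c :: α'') ++ 1 :: β from rfl, ih',
        desL_cons_cons]
      omega

/-- Descent decomposition at the maximal value. -/
lemma desL_decomp_max {γ δ : List ℕ} {M : ℕ} (hγ : ∀ x ∈ γ, x < M) (hδ : ∀ x ∈ δ, x < M) :
    desL (γ ++ M :: δ) = desL γ + desL δ + (if δ = [] then 0 else 1) := by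
  cases δ with
  | nil =>
    rw [if_pos rfl, desL_nil, add_zero, add_zero]
    exact desL_append_gt γ [M] (pairwise_singleton _ M) (by
      intro x hx y hy
      rw [mem_singleton] at hy
      exact hy ▸ hγ x hx)
  | cons d δ' =>
    rw [if_neg (by simp), desL_append M d, if_pos (hδ d (by simp)),
      desL_append_gt γ [M] (pairwise_singleton _ M) (by
        intro x hx y hy
        rw [mem_singleton] at hy
        exact hy ▸ hγ x hx)]

end S5
section S6
open List

/-- `φ` is order-compatible on the entries of `l`. -/
def OrdCompat (φ : ℕ → ℕ) (l : List ℕ) : Prop :=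
  ∀ a ∈ l, ∀ b ∈ l, (a < b ↔ φ a < φ b)

lemma OrdCompat.mono {φ : ℕ → ℕ} {l l' : List ℕ} (h : OrdCompat φ l) (hsub : ∀ x ∈ l', x ∈ l) :
    OrdCompat φ l' := fun a ha b hb => h a (hsub a ha) b (hsub b hb)

lemma OrdCompat.le {φ : ℕ → ℕ} {l : List ℕ} (h : OrdCompat φ l) {a b : ℕ} (ha : a ∈ l)
    (hb : b ∈ l) (hab : a ≤ b) : φ a ≤ φ b := by
  rcases eq_or_lt_of_le hab with rfl | hlt
  · exact le_rfl
  · exact le_of_lt ((h a ha b hb).1 hlt)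

lemma OrdCompat.inj {φ : ℕ → ℕ} {l : List ℕ} (h : OrdCompat φ l) {a b : ℕ} (ha : a ∈ l)
    (hb : b ∈ l) (hab : φ a = φ b) : a = b := by
  rcases lt_trichotomy a b with hlt | he | hlt
  · exact absurd hab (ne_of_lt ((h a ha b hb).1 hlt))
  · exact he
  · exact absurd hab.symm (ne_of_lt ((h b hb a ha).1 hlt))

lemma desL_map {φ : ℕ → ℕ} : ∀ {l : List ℕ}, OrdCompat φ l → desL (l.map φ) = desL l
  | [], _ => rfl
  | [a], _ => rfl
  | a :: b :: t, h => by
    rw [map_cons, map_cons, desL_cons_cons, desL_cons_cons, ← map_cons,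
      desL_map (h.mono (fun x hx => mem_cons_of_mem a hx))]
    congr 1
    by_cases hba : b < a
    · rw [if_pos hba, if_pos ((h b (by simp) a (by simp)).1 hba)]
    · rw [if_neg hba, if_neg (fun hc => hba ((h b (by simp) a (by simp)).2 hc))]

lemma sorted_map {φ : ℕ → ℕ} {l : List ℕ} (h : OrdCompat φ l) :
    (l.map φ).Pairwise (· < ·) ↔ l.Pairwise (· < ·) := by
  rw [pairwise_map]
  exact Pairwise.iff_of_mem (fun {a b} ha hb => (h a ha b hb).symm)

lemma minL_map {φ : ℕ → ℕ} {l : List ℕ} (h : OrdCompat φ l) (hne : l ≠ []) :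
    minL (l.map φ) = φ (minL l) := by
  apply minL_eq (by simpa using hne) (mem_map_of_mem (f := φ) (minL_mem hne))
  intro y hy
  obtain ⟨x, hx, rfl⟩ := mem_map.1 hy
  exact h.le (minL_mem hne) hx (minL_le hx)

lemma maxL_map {φ : ℕ → ℕ} {l : List ℕ} (h : OrdCompat φ l) (hne : l ≠ []) :
    maxL (l.map φ) = φ (maxL l) := by
  apply maxL_eq (by simpa using hne) (mem_map_of_mem (f := φ) (foldr_max_mem hne))
  intro y hy
  obtain ⟨x, hx, rfl⟩ := mem_map.1 hy
  exact h.le hx (foldr_max_mem hne) (le_maxL hx)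

lemma indexOf_map {φ : ℕ → ℕ} : ∀ {l : List ℕ}, OrdCompat φ l → ∀ {x : ℕ}, x ∈ l →
    (l.map φ).idxOf (φ x) = l.idxOf x
  | [], _, x, hx => by simp at hx
  | a :: t, h, x, hx => by
    rcases eq_or_ne a x with rfl | hax
    · rw [map_cons, idxOf_cons_self, idxOf_cons_self]
    · have hxt : x ∈ t := by
        rcases mem_cons.1 hx with h' | h'
        · exact absurd h'.symm hax
        · exact h'
      have hφ : φ a ≠ φ x := fun hc => hax (h.inj (by simp) hx hc)
      rw [map_cons, idxOf_cons_ne _ (by exact fun hc => hφ hc),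
        idxOf_cons_ne _ (fun hc => hax hc),
        indexOf_map (h.mono (fun y hy => mem_cons_of_mem a hy)) hxt]

lemma splitLeftAux_map {φ : ℕ → ℕ} : ∀ (fuel : ℕ) {l : List ℕ}, OrdCompat φ l →
    splitLeftAux fuel (l.map φ) = (splitLeftAux fuel l).map (List.map φ)
  | 0, l, _ => by cases l <;> rfl
  | fuel + 1, [], _ => rfl
  | fuel + 1, a :: t, h => by
    have hne : (a :: t) ≠ [] := by simp
    have hmax : maxL ((a :: t).map φ) = φ (maxL (a :: t)) := maxL_map h hne
    rw [splitLeftAux_succ fuel (show (a :: t).map φ ≠ [] by simp),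
      splitLeftAux_succ fuel hne,
      show ((a :: t).map φ).foldr Nat.max 0 = maxL ((a :: t).map φ) from rfl,
      show (a :: t).foldr Nat.max 0 = maxL (a :: t) from rfl, hmax,
      indexOf_map h (foldr_max_mem hne), ← map_take, ← map_drop,
      splitLeftAux_map fuel (h.mono (fun y hy => mem_of_mem_drop hy))]
    rfl

lemma splitLeft_map {φ : ℕ → ℕ} {l : List ℕ} (h : OrdCompat φ l) :
    splitLeft (l.map φ) = (splitLeft l).map (List.map φ) := by
  rw [splitLeft, splitLeft, length_map]
  exact splitLeftAux_map _ h

lemma W_map_aux : ∀ (n : ℕ) (l : List ℕ), l.length = n → ∀ {φ : ℕ → ℕ}, OrdCompat φ l →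
    W (l.map φ) = W l := by
  intro n
  induction n using Nat.strong_induction_on with
  | _ n ih =>
    intro l hl φ h
    by_cases htriv : l.length ≤ 1 ∨ l.Pairwise (· < ·)
    · rw [W_zero_of htriv, W_zero_of]
      rcases htriv with h' | h'
      · exact Or.inl (by rw [length_map]; exact h')
      · exact Or.inr ((sorted_map h).2 h')
    · have htriv' : ¬((l.map φ).length ≤ 1 ∨ (l.map φ).Pairwise (· < ·)) := by
        rintro (h' | h')
        · exact htriv (Or.inl (by rwa [length_map] at h'))
        · exact htriv (Or.inr ((sorted_map h).1 h'))
      have hne : l ≠ [] := by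
        intro he
        exact htriv (Or.inl (by rw [he]; simp))
      have hidx : (l.map φ).idxOf (minL (l.map φ)) = l.idxOf (minL l) := by
        rw [minL_map h hne, indexOf_map h (minL_mem hne)]
      have hilt : l.idxOf (minL l) < l.length := indexOf_minL_lt hne
      rw [W_unfold htriv, W_unfold htriv', hidx, ← map_take, ← map_drop,
        splitLeft_map (h.mono (fun y hy => mem_of_mem_take hy))]
      have hdrop : W ((l.drop (l.idxOf (minL l) + 1)).map φ)
          = W (l.drop (l.idxOf (minL l) + 1)) := by
        apply ih _ (by rw [length_drop]; omega) _ rfl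
          (h.mono (fun y hy => mem_of_mem_drop hy))
      rw [hdrop, desL_map (h.mono (fun y hy => mem_of_mem_drop hy)), map_map]
      have hB : ((splitLeft (l.take (l.idxOf (minL l)))).map
          ((fun p => desL p + W p) ∘ List.map φ)) =
          ((splitLeft (l.take (l.idxOf (minL l)))).map (fun p => desL p + W p)) := by
        apply map_congr_left
        intro p hp
        have hsub : ∀ x ∈ p, x ∈ l :=
          fun x hx => mem_of_mem_take ((mem_splitLeft_sublist hp).mem hx)
        have hplen : p.length < n := by
          have h1 := (mem_splitLeft_sublist hp).length_le
          rw [length_take] at h1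
          omega
        show desL (p.map φ) + W (p.map φ) = desL p + W p
        rw [desL_map (h.mono hsub), ih _ hplen _ rfl (h.mono hsub)]
      rw [hB]

lemma W_map {φ : ℕ → ℕ} {l : List ℕ} (h : OrdCompat φ l) : W (l.map φ) = W l :=
  W_map_aux l.length l rfl h

lemma fW_map {φ : ℕ → ℕ} {l : List ℕ} (h : OrdCompat φ l) : fW (l.map φ) = fW l := by
  rw [fW, fW, splitLeft_map h, map_map]
  congr 1
  apply map_congr_left
  intro p hp
  have hsub : ∀ x ∈ p, x ∈ l := fun x hx => (mem_splitLeft_sublist hp).mem hx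
  show desL (p.map φ) + W (p.map φ) = desL p + W p
  rw [desL_map (h.mono hsub), W_map (h.mono hsub)]

end S6
section S7a
open List Finset

/-- All orderings (as lists) of a finite set of naturals. -/
def ords (s : Finset ℕ) : Finset (List ℕ) := (s.sort (·≤·)).permutations.toFinset

lemma mem_ords {s : Finset ℕ} {l : List ℕ} : l ∈ ords s ↔ l.Nodup ∧ l.toFinset = s := by
  rw [ords, List.mem_toFinset, mem_permutations]
  constructor
  · intro h
    exact ⟨h.nodup_iff.2 (Finset.sort_nodup s _), by rw [List.toFinset_eq_of_perm _ _ h, Finset.sort_toFinset]⟩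
  · rintro ⟨h1, h2⟩
    exact List.perm_of_nodup_nodup_toFinset_eq h1 (Finset.sort_nodup s _)
      (by rw [h2, Finset.sort_toFinset])

lemma length_of_mem_ords {s : Finset ℕ} {l : List ℕ} (h : l ∈ ords s) : l.length = s.card := by
  rw [ords, List.mem_toFinset, mem_permutations] at h
  rw [h.length_eq, Finset.length_sort]

lemma not_mem_take_indexOf (v : ℕ) : ∀ (l : List ℕ), v ∉ l.take (l.idxOf v)
  | [] => by simp
  | a :: t => by
    rcases eq_or_ne a v with rfl | hav
    · rw [idxOf_cons_self]; simp
    · rw [idxOf_cons_ne _ (fun hc => hav hc), show (idxOf v t).succ = idxOf v t + 1 from rfl,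
        take_succ_cons]
      intro hc
      rcases mem_cons.1 hc with h | h
      · exact hav h.symm
      · exact not_mem_take_indexOf v t h

lemma take_indexOf_append {v : ℕ} {l : List ℕ} (hv : v ∈ l) :
    l.take (l.idxOf v) ++ v :: l.drop (l.idxOf v + 1) = l := by
  have hlt : l.idxOf v < l.length := idxOf_lt_length_iff.2 hv
  have hget : l[l.idxOf v] = v := by
    have := idxOf_get (a := v) (l := l) hlt
    simpa using this
  conv_rhs => rw [← take_append_drop (l.idxOf v) l]
  rw [drop_eq_getElem_cons hlt, hget]

/-- The main splitting identity: summing over all orderings of `s` equals summing over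
the choice of the set of values before `v`, and the orderings of the two parts. -/
lemma sum_ords_split {R : Type*} [CommRing R] (G : List ℕ → R) (s : Finset ℕ) (v : ℕ)
    (hv : v ∈ s) :
    ∑ l ∈ ords s, G l =
      ∑ A ∈ (s.erase v).powerset, ∑ l₁ ∈ ords A, ∑ l₂ ∈ ords ((s.erase v) \ A),
        G (l₁ ++ v :: l₂) := by
  have hps : ∀ A ∈ (s.erase v).powerset, ∀ x, x ∈ ords A ×ˢ ords ((s.erase v) \ A) ↔
      (x.1 ∈ ords A ∧ x.2 ∈ ords ((s.erase v) \ A)) := by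
    intro A _ x; exact Finset.mem_product
  rw [show (∑ A ∈ (s.erase v).powerset, ∑ l₁ ∈ ords A, ∑ l₂ ∈ ords ((s.erase v) \ A),
        G (l₁ ++ v :: l₂))
      = ∑ A ∈ (s.erase v).powerset, ∑ p ∈ ords A ×ˢ ords ((s.erase v) \ A),
        G (p.1 ++ v :: p.2) from by
      refine Finset.sum_congr rfl (fun A _ => ?_)
      rw [Finset.sum_product]]
  rw [← Finset.sum_sigma ((s.erase v).powerset)
    (fun A => ords A ×ˢ ords ((s.erase v) \ A)) (fun x => G (x.2.1 ++ v :: x.2.2))]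
  apply Finset.sum_nbij' (i := fun l => (⟨(l.take (l.idxOf v)).toFinset,
      (l.take (l.idxOf v), l.drop (l.idxOf v + 1))⟩ :
      Σ _ : Finset ℕ, List ℕ × List ℕ))
    (j := fun x => x.2.1 ++ v :: x.2.2)
  · -- forward membership
    intro l hl
    rw [mem_ords] at hl
    obtain ⟨hnd, hts⟩ := hl
    have hvl : v ∈ l := by rw [← List.mem_toFinset, hts]; exact hv
    set l₁ := l.take (l.idxOf v) with hl₁
    set l₂ := l.drop (l.idxOf v + 1) with hl₂
    have hdec : l₁ ++ v :: l₂ = l := take_indexOf_append hvl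
    have hnd' : (l₁ ++ v :: l₂).Nodup := hdec ▸ hnd
    rw [List.nodup_append] at hnd'
    obtain ⟨hnd₁, hnd₂, hdisj⟩ := hnd'
    have hvl₁ : v ∉ l₁ := not_mem_take_indexOf v l
    have hvl₂ : v ∉ l₂ := (List.nodup_cons.1 hnd₂).1
    have hmem : ∀ x, x ∈ l ↔ (x ∈ l₁ ∨ x = v ∨ x ∈ l₂) := by
      intro x
      rw [← hdec, List.mem_append, List.mem_cons]
    rw [Finset.mem_sigma, Finset.mem_product]
    refine ⟨?_, ?_, ?_⟩
    · rw [Finset.mem_powerset]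
      intro x hx
      rw [List.mem_toFinset] at hx
      rw [Finset.mem_erase]
      exact ⟨fun hc => hvl₁ (hc ▸ hx), by
        rw [← hts, List.mem_toFinset]; exact (hmem x).2 (Or.inl hx)⟩
    · rw [mem_ords]; exact ⟨hnd₁, rfl⟩
    · rw [mem_ords]
      refine ⟨(List.nodup_cons.1 hnd₂).2, ?_⟩
      ext x
      rw [List.mem_toFinset, Finset.mem_sdiff, Finset.mem_erase, ← hts,
        List.mem_toFinset, List.mem_toFinset, hmem x]
      constructor
      · intro hx
        have hxv : x ≠ v := fun hc => hvl₂ (hc ▸ hx)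
        exact ⟨⟨hxv, Or.inr (Or.inr hx)⟩, fun hc => hdisj x hc x (List.mem_cons_of_mem v hx) rfl⟩
      · rintro ⟨⟨hxv, hx⟩, hxl₁⟩
        rcases hx with h | h | h
        · exact absurd h hxl₁
        · exact absurd h hxv
        · exact h
  · -- backward membership
    rintro ⟨A, l₁, l₂⟩ hx
    rw [Finset.mem_sigma, Finset.mem_product] at hx
    obtain ⟨hA, h₁, h₂⟩ := hx
    rw [Finset.mem_powerset] at hA
    rw [mem_ords] at h₁ h₂
    obtain ⟨hnd₁, ht₁⟩ := h₁
    obtain ⟨hnd₂, ht₂⟩ := h₂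
    replace hA : A ⊆ s.erase v := hA
    replace hnd₁ : l₁.Nodup := hnd₁
    replace ht₁ : l₁.toFinset = A := ht₁
    replace hnd₂ : l₂.Nodup := hnd₂
    replace ht₂ : l₂.toFinset = (s.erase v) \ A := ht₂
    have hm₁ : ∀ x ∈ l₁, x ∈ s.erase v := fun x hx => hA (by rw [← ht₁]; exact List.mem_toFinset.2 hx)
    have hm₂ : ∀ x ∈ l₂, x ∈ (s.erase v) \ A := fun x hx => by
      rw [← ht₂]; exact List.mem_toFinset.2 hx
    rw [mem_ords]
    constructor
    · rw [List.nodup_append]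
      refine ⟨hnd₁, List.nodup_cons.2 ⟨fun hc => ?_, hnd₂⟩, ?_⟩
      · exact (Finset.mem_erase.1 (Finset.mem_sdiff.1 (hm₂ v hc)).1).1 rfl
      · intro a ha b hc hab; subst hab
        rcases List.mem_cons.1 hc with h | h
        · exact (Finset.mem_erase.1 (hm₁ a ha)).1 h
        · exact (Finset.mem_sdiff.1 (hm₂ a h)).2 (by
            rw [← ht₁]; exact List.mem_toFinset.2 ha)
    · show (l₁ ++ v :: l₂).toFinset = s
      ext x
      rw [List.mem_toFinset, List.mem_append, List.mem_cons]
      constructor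
      · rintro (h | h | h)
        · exact Finset.mem_of_mem_erase (hm₁ x h)
        · exact h ▸ hv
        · exact Finset.mem_of_mem_erase (Finset.mem_sdiff.1 (hm₂ x h)).1
      · intro hx
        rcases eq_or_ne x v with rfl | hxv
        · exact Or.inr (Or.inl rfl)
        · by_cases hxA : x ∈ A
          · refine Or.inl ?_
            have hx1 : x ∈ l₁.toFinset := by rw [ht₁]; exact hxA
            exact List.mem_toFinset.1 hx1
          · refine Or.inr (Or.inr ?_)
            rw [← List.mem_toFinset, ht₂]
            exact Finset.mem_sdiff.2 ⟨Finset.mem_erase.2 ⟨hxv, hx⟩, hxA⟩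
  · -- left inverse
    intro l hl
    rw [mem_ords] at hl
    have hvl : v ∈ l := by rw [← List.mem_toFinset, hl.2]; exact hv
    exact take_indexOf_append hvl
  · -- right inverse
    rintro ⟨A, l₁, l₂⟩ hx
    rw [Finset.mem_sigma, Finset.mem_product] at hx
    obtain ⟨hA, h₁, h₂⟩ := hx
    rw [Finset.mem_powerset] at hA
    rw [mem_ords] at h₁ h₂
    replace hA : A ⊆ s.erase v := hA
    have ht₁ : l₁.toFinset = A := h₁.2
    have hvl₁ : v ∉ l₁ := fun hc =>
      (Finset.mem_erase.1 (hA ((ht₁ ▸ List.mem_toFinset.2 hc)))).1 rfl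
    have hidx : (l₁ ++ v :: l₂).idxOf v = l₁.length := by
      rw [idxOf_append_of_notMem hvl₁, idxOf_cons_self, add_zero]
    have htake : (l₁ ++ v :: l₂).take ((l₁ ++ v :: l₂).idxOf v) = l₁ := by
      rw [hidx, take_left]
    have hdrop : (l₁ ++ v :: l₂).drop ((l₁ ++ v :: l₂).idxOf v + 1) = l₂ := by
      rw [hidx, List.drop_length_add_append 1, drop_one, tail_cons]
    show (⟨((l₁ ++ v :: l₂).take ((l₁ ++ v :: l₂).idxOf v)).toFinset,
      ((l₁ ++ v :: l₂).take ((l₁ ++ v :: l₂).idxOf v),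
        (l₁ ++ v :: l₂).drop ((l₁ ++ v :: l₂).idxOf v + 1))⟩ :
      Σ _ : Finset ℕ, List ℕ × List ℕ) = ⟨A, (l₁, l₂)⟩
    rw [htake, hdrop, ht₁]
  · -- value compatibility
    intro l hl
    rw [mem_ords] at hl
    have hvl : v ∈ l := by rw [← List.mem_toFinset, hl.2]; exact hv
    rw [show (l.take (l.idxOf v), l.drop (l.idxOf v + 1)).1 = l.take (l.idxOf v) from rfl]
    rw [take_indexOf_append hvl]

end S7a
section S7b
open List Finset

lemma sorted_lt_indexOf_lt {l₀ : List ℕ} (h : l₀.Pairwise (· < ·)) {a b : ℕ}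
    (ha : a ∈ l₀) (hb : b ∈ l₀) : a < b ↔ l₀.idxOf a < l₀.idxOf b := by
  have hia : l₀.idxOf a < l₀.length := idxOf_lt_length_iff.2 ha
  have hib : l₀.idxOf b < l₀.length := idxOf_lt_length_iff.2 hb
  have hga : l₀.get ⟨l₀.idxOf a, hia⟩ = a := idxOf_get hia
  have hgb : l₀.get ⟨l₀.idxOf b, hib⟩ = b := idxOf_get hib
  have hmono := (pairwise_iff_get).1 h
  constructor
  · intro hab
    rcases lt_trichotomy (l₀.idxOf a) (l₀.idxOf b) with h' | h' | h'
    · exact h'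
    · exfalso
      have : a = b := by rw [← hga, ← hgb]; congr 1; exact Fin.ext h'
      omega
    · exfalso
      have := hmono ⟨l₀.idxOf b, hib⟩ ⟨l₀.idxOf a, hia⟩ h'
      rw [hga, hgb] at this
      omega
  · intro h'
    have := hmono ⟨l₀.idxOf a, hia⟩ ⟨l₀.idxOf b, hib⟩ h'
    rwa [hga, hgb] at this

/-- the order-preserving relabeling `{1,…,card A} → A` -/
def φF (A : Finset ℕ) : ℕ → ℕ := fun j => (A.sort (· ≤ ·)).getD (j - 1) 0

lemma φF_get {A : Finset ℕ} {j : ℕ} (h1 : 1 ≤ j) (h2 : j ≤ A.card) :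
    ∃ h : j - 1 < (A.sort (· ≤ ·)).length, φF A j = (A.sort (· ≤ ·))[j-1] := by
  have hlt : j - 1 < (A.sort (· ≤ ·)).length := by rw [Finset.length_sort]; omega
  exact ⟨hlt, List.getD_eq_getElem _ _ hlt⟩

lemma φF_mem {A : Finset ℕ} {j : ℕ} (h1 : 1 ≤ j) (h2 : j ≤ A.card) : φF A j ∈ A := by
  obtain ⟨hlt, he⟩ := φF_get h1 h2
  rw [he, ← Finset.mem_sort (· ≤ ·)]
  exact List.getElem_mem hlt

lemma φF_lt_iff {A : Finset ℕ} {a b : ℕ} (ha1 : 1 ≤ a) (ha2 : a ≤ A.card)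
    (hb1 : 1 ≤ b) (hb2 : b ≤ A.card) : a < b ↔ φF A a < φF A b := by
  obtain ⟨hlta, hea⟩ := φF_get ha1 ha2
  obtain ⟨hltb, heb⟩ := φF_get hb1 hb2
  have hmono := (pairwise_iff_get).1 (Finset.sortedLT_sort A).pairwise
  constructor
  · intro hab
    rw [hea, heb]
    have := hmono ⟨a-1, hlta⟩ ⟨b-1, hltb⟩ (by simp only [Fin.mk_lt_mk]; omega)
    simpa using this
  · intro hab
    by_contra hc
    push_neg at hc
    rcases eq_or_lt_of_le hc with heq | hlt
    · subst heq; omega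
    · have := hmono ⟨b-1, hltb⟩ ⟨a-1, hlta⟩ (by simp only [Fin.mk_lt_mk]; omega)
      simp only [List.get_eq_getElem, Fin.val_mk] at this
      rw [hea, heb] at hab
      omega

lemma φF_ordCompat {A : Finset ℕ} {l : List ℕ} (hl : ∀ x ∈ l, 1 ≤ x ∧ x ≤ A.card) :
    OrdCompat (φF A) l := fun a ha b hb =>
  φF_lt_iff (hl a ha).1 (hl a ha).2 (hl b hb).1 (hl b hb).2

lemma φF_inj {A : Finset ℕ} {a b : ℕ} (ha1 : 1 ≤ a) (ha2 : a ≤ A.card)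
    (hb1 : 1 ≤ b) (hb2 : b ≤ A.card) (h : φF A a = φF A b) : a = b := by
  rcases lt_trichotomy a b with h' | h' | h'
  · exact absurd h (ne_of_lt ((φF_lt_iff ha1 ha2 hb1 hb2).1 h'))
  · exact h'
  · exact absurd h.symm (ne_of_lt ((φF_lt_iff hb1 hb2 ha1 ha2).1 h'))

lemma permWord_length {k : ℕ} (σ : Equiv.Perm (Fin k)) : (permWord σ).length = k := by
  rw [permWord, length_ofFn]

lemma permWord_mem {k : ℕ} (σ : Equiv.Perm (Fin k)) {x : ℕ} :
    x ∈ permWord σ ↔ ∃ i : Fin k, (σ i : ℕ) + 1 = x := by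
  rw [permWord, mem_ofFn]

lemma permWord_bounds {k : ℕ} (σ : Equiv.Perm (Fin k)) {x : ℕ} (hx : x ∈ permWord σ) :
    1 ≤ x ∧ x ≤ k := by
  obtain ⟨i, rfl⟩ := (permWord_mem σ).1 hx
  have := (σ i).isLt
  omega

lemma permWord_nodup {k : ℕ} (σ : Equiv.Perm (Fin k)) : (permWord σ).Nodup := by
  rw [permWord]
  apply List.nodup_ofFn.2
  intro i j h
  simp only at h
  exact σ.injective (Fin.ext (by omega))

lemma map_inj_of_ordCompat : ∀ {l₁ l₂ : List ℕ} {φ : ℕ → ℕ},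
    OrdCompat φ (l₁ ++ l₂) → l₁.map φ = l₂.map φ → l₁ = l₂
  | [], [], _, _, _ => rfl
  | [], b :: t, _, _, hm => by simp at hm
  | a :: s, [], _, _, hm => by simp at hm
  | a :: s, b :: t, φ, h, hm => by
    rw [List.map_cons, List.map_cons] at hm
    injection hm with hm1 hm2
    have hab : a = b := h.inj (by simp) (by simp) hm1
    subst hab
    rw [map_inj_of_ordCompat (φ := φ) (h.mono (by
      intro x hx
      rcases mem_append.1 hx with h' | h'
      · exact mem_append_left _ (mem_cons_of_mem a h')
      · exact mem_append_right _ (mem_cons_of_mem a h'))) hm2]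

/-- THE BRIDGE: a sum of an order-invariant statistic over all orderings of a set `A`
equals the sum over all permutations of `Fin A.card`. -/
lemma sum_ords_eq_sum_perm {R : Type*} [CommRing R] (g : List ℕ → R)
    (hg : ∀ (φ : ℕ → ℕ) (l : List ℕ), OrdCompat φ l → g (l.map φ) = g l)
    (A : Finset ℕ) :
    ∑ l ∈ ords A, g l = ∑ σ : Equiv.Perm (Fin A.card), g (permWord σ) := by
  symm
  apply Finset.sum_bij (i := fun (σ : Equiv.Perm (Fin A.card)) _ => (permWord σ).map (φF A))
  · -- membership
    intro σ _
    rw [mem_ords]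
    have hoc : OrdCompat (φF A) (permWord σ) := φF_ordCompat (fun x hx => permWord_bounds σ hx)
    constructor
    · exact (permWord_nodup σ).map_on (fun x hx y hy h => hoc.inj hx hy h)
    · ext x
      rw [List.mem_toFinset, List.mem_map]
      constructor
      · rintro ⟨e, he, rfl⟩
        have hb := permWord_bounds σ he
        exact φF_mem hb.1 hb.2
      · intro hx
        have hxs : x ∈ A.sort (· ≤ ·) := (Finset.mem_sort (· ≤ ·)).2 hx
        set m := (A.sort (· ≤ ·)).idxOf x with hm
        have hmlt : m < (A.sort (· ≤ ·)).length := idxOf_lt_length_iff.2 hxs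
        have hmk : m < A.card := by rwa [Finset.length_sort] at hmlt
        refine ⟨m + 1, ?_, ?_⟩
        · rw [permWord_mem]
          exact ⟨σ.symm ⟨m, hmk⟩, by rw [Equiv.apply_symm_apply]⟩
        · obtain ⟨hlt, he⟩ := φF_get (A := A) (j := m + 1) (by omega) (by omega)
          rw [he]
          have : (A.sort (· ≤ ·))[m] = x := List.getElem_idxOf hmlt
          simpa using this
  · -- injectivity
    intro σ₁ _ σ₂ _ h
    have hoc : OrdCompat (φF A) (permWord σ₁ ++ permWord σ₂) := φF_ordCompat (by
      intro x hx
      rcases mem_append.1 hx with h' | h'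
      · exact permWord_bounds σ₁ h'
      · exact permWord_bounds σ₂ h')
    have hw : permWord σ₁ = permWord σ₂ := map_inj_of_ordCompat hoc h
    rw [permWord, permWord, ofFn_inj] at hw
    ext i
    have h1 := congrFun hw i
    have : (σ₁ i : ℕ) = (σ₂ i : ℕ) := by omega
    rw [this]
  · -- surjectivity
    intro l hl
    rw [mem_ords] at hl
    obtain ⟨hnd, hts⟩ := hl
    have hlen : l.length = A.card := by
      rw [← hts]; exact (List.toFinset_card_of_nodup hnd).symm
    have hmemsort : ∀ j : Fin A.card, l.get (Fin.cast hlen.symm j) ∈ A.sort (· ≤ ·) := by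
      intro j
      have hmem : l.get (Fin.cast hlen.symm j) ∈ l.toFinset := List.mem_toFinset.2 (get_mem _ _)
      rw [hts] at hmem
      exact (Finset.mem_sort _).2 hmem
    have hidxlt : ∀ j : Fin A.card,
        (A.sort (· ≤ ·)).idxOf (l.get (Fin.cast hlen.symm j)) < A.card := by
      intro j
      have h5 : (A.sort (· ≤ ·)).idxOf (l.get (Fin.cast hlen.symm j))
          < (A.sort (· ≤ ·)).length := idxOf_lt_length_iff.2 (hmemsort j)
      rwa [Finset.length_sort] at h5
    set f : Fin A.card → Fin A.card := fun j =>
      ⟨(A.sort (· ≤ ·)).idxOf (l.get (Fin.cast hlen.symm j)), hidxlt j⟩ with hf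
    have hfinj : Function.Injective f := by
      intro i j h
      have h' : (A.sort (· ≤ ·)).idxOf (l.get (Fin.cast hlen.symm i))
          = (A.sort (· ≤ ·)).idxOf (l.get (Fin.cast hlen.symm j)) := congrArg Fin.val h
      have h2 := (idxOf_inj (hmemsort i)).1 h'
      have h3 := (hnd.get_inj_iff).1 h2
      have h4 := congrArg Fin.val h3
      simp only [Fin.coe_cast] at h4
      exact Fin.ext h4
    have hfbij : Function.Bijective f := Finite.injective_iff_bijective.1 hfinj
    refine ⟨Equiv.ofBijective f hfbij, Finset.mem_univ _, ?_⟩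
    apply List.ext_get (by rw [length_map, permWord_length, hlen])
    intro i h1 h2
    have hik : i < A.card := by rwa [length_map, permWord_length] at h1
    rw [List.get_eq_getElem, List.getElem_map]
    change φF A ((permWord (Equiv.ofBijective f hfbij)).get ⟨i, by rwa [length_map] at h1⟩) = _
    have hg1 : (permWord (Equiv.ofBijective f hfbij)).get ⟨i, by rwa [length_map] at h1⟩
        = (f ⟨i, hik⟩ : ℕ) + 1 := by
      simp only [permWord, List.get_ofFn]
      rfl
    rw [hg1]
    have hfv : (f ⟨i, hik⟩ : ℕ) = (A.sort (· ≤ ·)).idxOf (l.get ⟨i, h2⟩) := rfl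
    rw [hfv, φF, Nat.add_sub_cancel]
    have hmlt : (A.sort (· ≤ ·)).idxOf (l.get ⟨i, h2⟩) < (A.sort (· ≤ ·)).length := by
      have := hidxlt ⟨i, hik⟩
      simp only [Fin.cast_mk] at this
      rw [Finset.length_sort]
      exact this
    rw [List.getD_eq_getElem _ _ hmlt]
    exact List.getElem_idxOf hmlt
  · -- value
    intro σ _
    exact (hg (φF A) (permWord σ) (φF_ordCompat (fun x hx => permWord_bounds σ hx))).symm

end S7b
section S8
open List Finset

def stdS (n : ℕ) : Finset ℕ := Finset.Icc 1 n

lemma stdS_card (n : ℕ) : (stdS n).card = n := by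
  rw [stdS, Nat.card_Icc]; omega

lemma mem_stdS {n x : ℕ} : x ∈ stdS n ↔ 1 ≤ x ∧ x ≤ n := by
  rw [stdS, Finset.mem_Icc]

lemma main_count {R : Type*} [CommRing R] (g h : List ℕ → R)
    (hg : ∀ (φ : ℕ → ℕ) (l : List ℕ), OrdCompat φ l → g (l.map φ) = g l)
    (hh : ∀ (φ : ℕ → ℕ) (l : List ℕ), OrdCompat φ l → h (l.map φ) = h l)
    (n v : ℕ) (hv : v ∈ stdS n) (G : List ℕ → R)
    (hdec : ∀ A ∈ ((stdS n).erase v).powerset, ∀ l₁ ∈ ords A,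
      ∀ l₂ ∈ ords (((stdS n).erase v) \ A), G (l₁ ++ v :: l₂) = g l₁ * h l₂) :
    ∑ l ∈ ords (stdS n), G l =
      ∑ i ∈ Finset.range n, (Nat.choose (n-1) i : R) *
        (∑ σ : Equiv.Perm (Fin i), g (permWord σ)) *
        (∑ σ : Equiv.Perm (Fin (n-1-i)), h (permWord σ)) := by
  have hn1 : 1 ≤ n := by
    have := mem_stdS.1 hv
    omega
  have hecard : ((stdS n).erase v).card = n - 1 := by
    rw [Finset.card_erase_of_mem hv, stdS_card]
  rw [sum_ords_split G _ v hv]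
  have hAsum : ∀ A ∈ ((stdS n).erase v).powerset,
      (∑ l₁ ∈ ords A, ∑ l₂ ∈ ords (((stdS n).erase v) \ A), G (l₁ ++ v :: l₂))
      = (∑ σ : Equiv.Perm (Fin A.card), g (permWord σ)) *
        (∑ σ : Equiv.Perm (Fin (n-1-A.card)), h (permWord σ)) := by
    intro A hA
    have hsd : (((stdS n).erase v) \ A).card = n - 1 - A.card := by
      rw [Finset.card_sdiff_of_subset (Finset.mem_powerset.1 hA), hecard]
    have step1 : ∀ l₁ ∈ ords A,
        (∑ l₂ ∈ ords (((stdS n).erase v) \ A), G (l₁ ++ v :: l₂))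
        = g l₁ * ∑ l₂ ∈ ords (((stdS n).erase v) \ A), h l₂ := by
      intro l₁ h₁
      rw [Finset.mul_sum]
      exact Finset.sum_congr rfl (fun l₂ h₂ => hdec A hA l₁ h₁ l₂ h₂)
    rw [Finset.sum_congr rfl step1, ← Finset.sum_mul,
      sum_ords_eq_sum_perm g hg A, sum_ords_eq_sum_perm h hh, hsd]
  rw [Finset.sum_congr rfl hAsum, Finset.sum_powerset, hecard]
  rw [show n - 1 + 1 = n by omega]
  apply Finset.sum_congr rfl
  intro j hj
  have hconst : ∀ A ∈ Finset.powersetCard j ((stdS n).erase v),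
      (∑ σ : Equiv.Perm (Fin A.card), g (permWord σ)) *
        (∑ σ : Equiv.Perm (Fin (n-1-A.card)), h (permWord σ))
      = (∑ σ : Equiv.Perm (Fin j), g (permWord σ)) *
        (∑ σ : Equiv.Perm (Fin (n-1-j)), h (permWord σ)) := by
    intro A hA
    have : A.card = j := (Finset.mem_powersetCard.1 hA).2
    rw [this]
  rw [Finset.sum_congr rfl hconst, Finset.sum_const, Finset.card_powersetCard, hecard,
    nsmul_eq_mul, mul_assoc]

end S8
section S9
open List Finset MvPolynomial

/-- the companion q-Eulerian polynomial built from the statistic `fW` -/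
noncomputable def Fpoly (n : ℕ) : MvPolynomial (Fin 2) ℤ :=
  ∑ σ : Equiv.Perm (Fin n), X 0 ^ desL (permWord σ) * X 1 ^ fW (permWord σ)

lemma Epoly_eq_W (n : ℕ) :
    Epoly n = ∑ σ : Equiv.Perm (Fin n), X 0 ^ desL (permWord σ) * X 1 ^ W (permWord σ) := by
  rw [Epoly]
  exact Finset.sum_congr rfl (fun σ _ => by rw [weightL_eq_W])

lemma EpolyQx_eq_W (n : ℕ) :
    EpolyQx n = ∑ σ : Equiv.Perm (Fin n),
      (X 1 * X 0) ^ desL (permWord σ) * X 1 ^ W (permWord σ) := by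
  rw [EpolyQx]
  exact Finset.sum_congr rfl (fun σ _ => by rw [weightL_eq_W])

lemma permWord_eq_nil_iff {k : ℕ} (σ : Equiv.Perm (Fin k)) : permWord σ = [] ↔ k = 0 := by
  rw [← List.length_eq_zero_iff, permWord_length]

/-- the `g`-statistic for the decomposition of `E` at the value 1 -/
noncomputable def gE (l : List ℕ) : MvPolynomial (Fin 2) ℤ :=
  X 0 ^ desL l * X 1 ^ fW l * (if l = [] then 1 else X 0)

noncomputable def hE (l : List ℕ) : MvPolynomial (Fin 2) ℤ :=
  (X 1 * X 0) ^ desL l * X 1 ^ W l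

lemma gE_inv : ∀ (φ : ℕ → ℕ) (l : List ℕ), OrdCompat φ l → gE (l.map φ) = gE l := by
  intro φ l h
  rw [gE, gE, desL_map h, fW_map h]
  congr 1
  by_cases hl : l = []
  · subst hl; simp
  · rw [if_neg hl, if_neg (by simpa using hl)]

lemma hE_inv : ∀ (φ : ℕ → ℕ) (l : List ℕ), OrdCompat φ l → hE (l.map φ) = hE l := by
  intro φ l h
  rw [hE, hE, desL_map h, W_map h]

lemma ite_pow_e (l : List ℕ) : (if l = [] then (1 : MvPolynomial (Fin 2) ℤ) else X 0)
    = X 0 ^ (if l = [] then 0 else 1) := by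
  by_cases hl : l = [] <;> simp [hl]

lemma sum_perm_gE (i : ℕ) :
    (∑ σ : Equiv.Perm (Fin i), gE (permWord σ))
      = Fpoly i * (if i = 0 then 1 else X 0) := by
  rw [Fpoly, Finset.sum_mul]
  apply Finset.sum_congr rfl
  intro σ _
  rw [gE]
  congr 1
  by_cases hi : i = 0
  · rw [if_pos hi, if_pos ((permWord_eq_nil_iff σ).2 hi)]
  · rw [if_neg hi, if_neg (fun hc => hi ((permWord_eq_nil_iff σ).1 hc))]

lemma sum_perm_hE (m : ℕ) :
    (∑ σ : Equiv.Perm (Fin m), hE (permWord σ)) = EpolyQx m := by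
  rw [EpolyQx_eq_W]; rfl

/-- Theorem A: decomposition of `E_n` at the value 1. -/
lemma thmA {n : ℕ} (hn : 1 ≤ n) :
    Epoly n = ∑ i ∈ Finset.range n, (Nat.choose (n-1) i : MvPolynomial (Fin 2) ℤ) *
      (Fpoly i * (if i = 0 then 1 else X 0)) * EpolyQx (n-1-i) := by
  have hv : (1 : ℕ) ∈ stdS n := mem_stdS.2 ⟨le_rfl, hn⟩
  set G : List ℕ → MvPolynomial (Fin 2) ℤ := fun l => X 0 ^ desL l * X 1 ^ W l with hG
  have hGinv : ∀ (φ : ℕ → ℕ) (l : List ℕ), OrdCompat φ l → G (l.map φ) = G l := by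
    intro φ l h
    rw [hG]
    simp only
    rw [desL_map h, W_map h]
  have hbridge := sum_ords_eq_sum_perm G hGinv (stdS n)
  rw [stdS_card] at hbridge
  have hmc := main_count gE hE gE_inv hE_inv n 1 hv G (by
    intro A hA l₁ h₁ l₂ h₂
    rw [mem_ords] at h₁ h₂
    have hA' := Finset.mem_powerset.1 hA
    have hα : ∀ x ∈ l₁, 1 < x := by
      intro x hx
      have : x ∈ (stdS n).erase 1 := hA' (by rw [← h₁.2]; exact List.mem_toFinset.2 hx)
      have h2 := Finset.mem_erase.1 this
      have h3 := mem_stdS.1 h2.2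
      omega
    have hβ : ∀ x ∈ l₂, 1 < x := by
      intro x hx
      have : x ∈ ((stdS n).erase 1) \ A := by rw [← h₂.2]; exact List.mem_toFinset.2 hx
      have h2 := Finset.mem_erase.1 (Finset.mem_sdiff.1 this).1
      have h3 := mem_stdS.1 h2.2
      omega
    rw [hG]
    simp only
    rw [desL_decomp_min hα hβ, W_decomp_min hα hβ, gE, hE, ite_pow_e]
    rw [pow_add, pow_add, pow_add, pow_add, mul_pow]
    ring)
  rw [hbridge] at hmc
  rw [Epoly_eq_W,
    show (∑ σ : Equiv.Perm (Fin n), X 0 ^ desL (permWord σ) * X 1 ^ W (permWord σ))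
      = ∑ σ : Equiv.Perm (Fin n), G (permWord σ) from rfl, hmc]
  apply Finset.sum_congr rfl
  intro i _
  rw [sum_perm_gE, sum_perm_hE]

/-- the `g`/`h` statistics for the decomposition of `F` at the value `n` -/
lemma sum_perm_gF (i : ℕ) :
    (∑ σ : Equiv.Perm (Fin i), hE (permWord σ)) = EpolyQx i := sum_perm_hE i

/-- Theorem B: decomposition of `F_n` at the maximal value. -/
lemma thmB {n : ℕ} (hn : 1 ≤ n) :
    Fpoly n = ∑ i ∈ Finset.range n, (Nat.choose (n-1) i : MvPolynomial (Fin 2) ℤ) *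
      EpolyQx i * (Fpoly (n-1-i) * (if n-1-i = 0 then 1 else X 0)) := by
  have hv : (n : ℕ) ∈ stdS n := mem_stdS.2 ⟨hn, le_rfl⟩
  set G : List ℕ → MvPolynomial (Fin 2) ℤ := fun l => X 0 ^ desL l * X 1 ^ fW l with hG
  have hGinv : ∀ (φ : ℕ → ℕ) (l : List ℕ), OrdCompat φ l → G (l.map φ) = G l := by
    intro φ l h
    rw [hG]
    simp only
    rw [desL_map h, fW_map h]
  have hbridge := sum_ords_eq_sum_perm G hGinv (stdS n)
  rw [stdS_card] at hbridge
  have hmc := main_count hE gE hE_inv gE_inv n n hv G (by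
    intro A hA l₁ h₁ l₂ h₂
    rw [mem_ords] at h₁ h₂
    have hA' := Finset.mem_powerset.1 hA
    have hγ : ∀ x ∈ l₁, x < n := by
      intro x hx
      have : x ∈ (stdS n).erase n := hA' (by rw [← h₁.2]; exact List.mem_toFinset.2 hx)
      have h2 := Finset.mem_erase.1 this
      have h3 := mem_stdS.1 h2.2
      rcases Nat.lt_or_ge x n with h' | h'
      · exact h'
      · exact absurd (le_antisymm h3.2 h') h2.1
    have hδ : ∀ x ∈ l₂, x < n := by
      intro x hx
      have : x ∈ ((stdS n).erase n) \ A := by rw [← h₂.2]; exact List.mem_toFinset.2 hx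
      have h2 := Finset.mem_erase.1 (Finset.mem_sdiff.1 this).1
      have h3 := mem_stdS.1 h2.2
      rcases Nat.lt_or_ge x n with h' | h'
      · exact h'
      · exact absurd (le_antisymm h3.2 h') h2.1
    rw [hG]
    simp only
    rw [desL_decomp_max hγ hδ, fW_decomp_max hγ hδ, gE, hE, ite_pow_e]
    rw [pow_add, pow_add, pow_add, pow_add, mul_pow]
    ring)
  rw [hbridge] at hmc
  rw [show Fpoly n = ∑ σ : Equiv.Perm (Fin n), G (permWord σ) from rfl, hmc]
  apply Finset.sum_congr rfl
  intro i _
  rw [sum_perm_gE, sum_perm_hE]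

lemma Epoly_zero : Epoly 0 = 1 := by
  rw [Epoly]
  have : ∀ σ : Equiv.Perm (Fin 0),
      X 0 ^ desL (permWord σ) * X 1 ^ weightL (permWord σ) = (1 : MvPolynomial (Fin 2) ℤ) := by
    intro σ
    have hnil : permWord σ = [] := (permWord_eq_nil_iff σ).2 rfl
    rw [hnil]
    norm_num [desL_nil, weightL, weightAux_zero_of]
  rw [Finset.sum_congr rfl (fun σ _ => this σ), Finset.sum_const, card_univ, Fintype.card_perm]
  simp

lemma Fpoly_zero : Fpoly 0 = 1 := by
  rw [Fpoly]
  have : ∀ σ : Equiv.Perm (Fin 0),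
      X 0 ^ desL (permWord σ) * X 1 ^ fW (permWord σ) = (1 : MvPolynomial (Fin 2) ℤ) := by
    intro σ
    have hnil : permWord σ = [] := (permWord_eq_nil_iff σ).2 rfl
    rw [hnil]
    norm_num [desL_nil, fW_nil]
  rw [Finset.sum_congr rfl (fun σ _ => this σ), Finset.sum_const, card_univ, Fintype.card_perm]
  simp

/-- The two statistics are equidistributed: `E_n = F_n`. -/
lemma Epoly_eq_Fpoly : ∀ n : ℕ, Epoly n = Fpoly n := by
  intro n
  rcases Nat.eq_zero_or_pos n with rfl | hn
  · rw [Epoly_zero, Fpoly_zero]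
  · rw [thmA hn, thmB hn]
    rw [← Finset.sum_range_reflect
      (fun i => (Nat.choose (n-1) i : MvPolynomial (Fin 2) ℤ) *
        EpolyQx i * (Fpoly (n-1-i) * (if n-1-i = 0 then 1 else X 0))) n]
    apply Finset.sum_congr rfl
    intro i hi
    have hi' : i < n := Finset.mem_range.1 hi
    have h1 : n - 1 - (n - 1 - i) = i := by omega
    have h2 : (n-1).choose (n-1-i) = (n-1).choose i := by
      rw [← Nat.choose_symm (show n-1-i ≤ n-1 by omega), h1]
    rw [h1, h2]
    ring

end S9
open MvPolynomial in
/-- The recurrence for the q-Eulerian polynomials `E_n(x,q)`. -/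
theorem Epoly_recurrence :
    Epoly 0 = 1 ∧ ∀ n : ℕ, 1 ≤ n →
      Epoly n = (∑ i ∈ Finset.Icc 1 (n - 1),
          (Nat.choose (n - 1) i : MvPolynomial (Fin 2) ℤ) * Epoly i *
            EpolyQx (n - i - 1) * X 0) + EpolyQx (n - 1) := by
  refine ⟨Epoly_zero, ?_⟩
  intro n hn
  rw [thmA hn]
  have hIco : Finset.Ico 1 n = Finset.Icc 1 (n-1) := by
    rw [← Finset.Ico_add_one_right_eq_Icc, show n - 1 + 1 = n by omega]
  rw [Finset.range_eq_Ico, Finset.sum_eq_sum_Ico_succ_bot hn, hIco]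
  rw [show (Nat.choose (n-1) 0 : MvPolynomial (Fin 2) ℤ) *
      (Fpoly 0 * (if 0 = 0 then 1 else X 0)) * EpolyQx (n-1-0) = EpolyQx (n-1) from by
    rw [Nat.choose_zero_right, Fpoly_zero]; simp]
  rw [add_comm]
  congr 1
  apply Finset.sum_congr rfl
  intro i hi
  have hi' := Finset.mem_Icc.1 hi
  rw [if_neg (by omega), ← Epoly_eq_Fpoly, show n - 1 - i = n - i - 1 by omega]
  ring
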